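/- arXiv:cond-mat/9710169 — 3 statements merged into one kernel-verified Lean document; each statement's English description precedes it below -/
import Mathlib

section
/- Let V : ℝ → ℝ be a C² function that is periodic with period l > 0, and let E > sup V. Let q : ℝ → ℝ be a solution of Newton's equation q̈(t) = -V'(q(t)) with energy E, i.e. ½ q̇(t)² + V(q(t)) = E for all t. Then the asymptotic velocity lim_{t→∞} q(t)/t exists and equals sign(q̇(0)) · l / (∫₀^l (2(E - V(s)))^{-1/2} ds). -/
open Filter MeasureTheory

/-- One-dimensional motion in a periodic potential above the
maximum of the potential is ballistic, with asymptotic velocity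
`sign(q̇(0)) · l / ∫₀^l (2(E - V(s)))^{-1/2} ds`. -/
theorem ballistic_dim_one (V : ℝ → ℝ) (hV : ContDiff ℝ 2 V)
    (l : ℝ) (hl : 0 < l) (hper : ∀ x, V (x + l) = V x)
    (E : ℝ) (hE : (⨆ x, V x) < E)
    (q : ℝ → ℝ) (hq : ContDiff ℝ 2 q)
    (hnewton : ∀ t, deriv (deriv q) t = - deriv V (q t))
    (henergy : ∀ t, (deriv q t) ^ 2 / 2 + V (q t) = E) :
    Tendsto (fun t => q t / t) atTop
      (nhds (Real.sign (deriv q 0) * l /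
        ∫ s in (0:ℝ)..l, (Real.sqrt (2 * (E - V s)))⁻¹)) := by
  have hVcont : Continuous V := hV.continuous
  have hVper : Function.Periodic V l := hper
  -- V is bounded above by its supremum
  have hbddA : BddAbove (Set.range V) := by
    obtain ⟨C, hC⟩ := (isCompact_Icc (a := (0:ℝ)) (b := l)).exists_bound_of_continuousOn
      hVcont.continuousOn
    refine ⟨C, ?_⟩
    rintro _ ⟨x, rfl⟩
    obtain ⟨y, hy, hxy⟩ := hVper.exists_mem_Ico₀ hl x
    rw [hxy]
    calc V y ≤ |V y| := le_abs_self _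
      _ ≤ C := by simpa using hC y ⟨hy.1, hy.2.le⟩
  have hEV : ∀ x, 0 < E - V x := by
    intro x
    have : V x ≤ ⨆ x, V x := le_ciSup hbddA x
    linarith
  set g : ℝ → ℝ := fun x => (Real.sqrt (2 * (E - V x)))⁻¹ with hgdef
  have hgpos : ∀ x, 0 < g x := fun x =>
    inv_pos.mpr (Real.sqrt_pos.mpr (by have := hEV x; linarith))
  have hgcont : Continuous g := by
    apply Continuous.inv₀
    · exact (continuous_const.mul (continuous_const.sub hVcont)).sqrt
    · intro x
      exact ne_of_gt (Real.sqrt_pos.mpr (by have := hEV x; linarith))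
  have hgper : Function.Periodic g l := by
    intro x; simp only [hgdef, hper x]
  set F : ℝ → ℝ := fun x => ∫ s in (0:ℝ)..x, g s with hFdef
  have hFderiv : ∀ x, HasDerivAt F (g x) x := by
    intro x
    exact intervalIntegral.integral_hasDerivAt_right
      (hgcont.intervalIntegrable _ _)
      (hgcont.stronglyMeasurableAtFilter _ _)
      hgcont.continuousAt
  set T : ℝ := ∫ s in (0:ℝ)..l, g s with hTdef
  have hTpos : 0 < T :=
    intervalIntegral.intervalIntegral_pos_of_pos (hgcont.intervalIntegrable _ _) hgpos hl
  -- velocity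
  set p : ℝ → ℝ := deriv q with hpdef
  have hpcont : Continuous p := hq.continuous_deriv one_le_two
  have hqderiv : ∀ t, HasDerivAt q (p t) t := fun t =>
    ((hq.differentiable two_ne_zero) t).hasDerivAt
  have hsq : ∀ t, p t ^ 2 = 2 * (E - V (q t)) := by
    intro t; have := henergy t; linarith
  have hpne : ∀ t, p t ≠ 0 := by
    intro t h
    have := hsq t
    rw [h] at this
    have := hEV (q t); nlinarith
  -- constant sign of the velocity, key identity
  have key : ∀ t, g (q t) * p t = Real.sign (p 0) := by
    have same_sign : (∀ t, 0 < p t) ∨ (∀ t, p t < 0) := by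
      rcases (hpne 0).lt_or_gt with h0 | h0
      · right
        intro t
        by_contra h
        push_neg at h
        have ht : 0 < p t := h.lt_of_ne' (hpne t)
        have : (0:ℝ) ∈ Set.uIcc (p 0) (p t) := Set.mem_uIcc.mpr (Or.inl ⟨h0.le, ht.le⟩)
        obtain ⟨s, _, hs⟩ := intermediate_value_uIcc hpcont.continuousOn this
        exact hpne s hs
      · left
        intro t
        by_contra h
        push_neg at h
        have ht : p t < 0 := lt_of_le_of_ne h (hpne t)
        have : (0:ℝ) ∈ Set.uIcc (p 0) (p t) := Set.mem_uIcc.mpr (Or.inr ⟨ht.le, h0.le⟩)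
        obtain ⟨s, _, hs⟩ := intermediate_value_uIcc hpcont.continuousOn this
        exact hpne s hs
    intro t
    rcases same_sign with hpos | hneg
    · have : Real.sqrt (2 * (E - V (q t))) = p t := by
        rw [← hsq t, Real.sqrt_sq (hpos t).le]
      rw [hgdef]
      simp only [this]
      rw [inv_mul_cancel₀ (hpne t), Real.sign_of_pos (hpos 0)]
    · have : Real.sqrt (2 * (E - V (q t))) = -p t := by
        have : p t ^ 2 = (-p t) ^ 2 := by ring
        rw [← hsq t, this, Real.sqrt_sq (by linarith [hneg t])]
      rw [hgdef]
      simp only [this]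
      rw [Real.sign_of_neg (hneg 0), ← div_eq_inv_mul, div_neg, div_self (hpne t)]
  set σ : ℝ := Real.sign (p 0) with hσdef
  -- F ∘ q is affine: F (q t) = F (q 0) + σ t
  have hφ : ∀ t, HasDerivAt (fun t => F (q t) - σ * t) 0 t := by
    intro t
    have h1 : HasDerivAt (fun t => F (q t)) (g (q t) * p t) t :=
      (hFderiv (q t)).comp t (hqderiv t)
    have h2 : HasDerivAt (fun t : ℝ => σ * t) σ t := by
      simpa using (hasDerivAt_id t).const_mul σ
    have := h1.sub h2
    rw [key t] at this
    rw [sub_self] at this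
    exact this
  have hFq : ∀ t, F (q t) = F (q 0) + σ * t := by
    intro t
    have hdiff : Differentiable ℝ (fun t => F (q t) - σ * t) := fun t => (hφ t).differentiableAt
    have hd0 : ∀ t, deriv (fun t => F (q t) - σ * t) t = 0 := fun t => (hφ t).deriv
    have := is_const_of_deriv_eq_zero hdiff hd0 t 0
    simp only [mul_zero, sub_zero] at this
    linarith [this]
  -- F(x + l) = F x + T
  have hFshift : ∀ x, F (x + l) = F x + T := by
    intro x
    have h1 : (∫ s in x..x + l, g s) = ∫ s in (0:ℝ)..0 + l, g s :=
      hgper.intervalIntegral_add_eq x 0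
    have h2 : F x + ∫ s in x..x + l, g s = F (x + l) :=
      intervalIntegral.integral_add_adjacent_intervals
        (hgcont.intervalIntegrable _ _) (hgcont.intervalIntegrable _ _)
    rw [h1] at h2
    simp only [zero_add] at h2
    rw [← h2, hTdef]
  -- h := F x - (T/l) x is periodic and bounded
  set h : ℝ → ℝ := fun x => F x - T / l * x with hhdef
  have hhper : Function.Periodic h l := by
    intro x
    simp only [hhdef, hFshift x]
    field_simp
    ring
  have hFcont : Continuous F :=
    continuous_iff_continuousAt.mpr fun x => (hFderiv x).continuousAt
  have hhcont : Continuous h := hFcont.sub (continuous_const.mul continuous_id)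
  obtain ⟨M, hM⟩ : ∃ M, ∀ x, |h x| ≤ M := by
    obtain ⟨C, hC⟩ := (isCompact_Icc (a := (0:ℝ)) (b := l)).exists_bound_of_continuousOn
      hhcont.continuousOn
    refine ⟨C, fun x => ?_⟩
    obtain ⟨y, hy, hxy⟩ := hhper.exists_mem_Ico₀ hl x
    rw [hxy]
    simpa using hC y ⟨hy.1, hy.2.le⟩
  -- expression of q t
  have hqt : ∀ t, q t = l / T * (F (q 0) + σ * t - h (q t)) := by
    intro t
    have h1 : F (q t) = T / l * q t + h (q t) := by simp [hhdef]
    have h2 := hFq t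
    rw [h1] at h2
    field_simp at h2 ⊢
    linarith
  -- final limit
  have hcore : Tendsto (fun t => q t / t - σ * l / T) atTop (nhds 0) := by
    have C0 : (0:ℝ) ≤ l / T * (|F (q 0)| + M) := by
      have : (0:ℝ) ≤ M := le_trans (abs_nonneg _) (hM 0)
      positivity
    apply squeeze_zero_norm' (a := fun t => l / T * (|F (q 0)| + M) / t)
    · filter_upwards [eventually_ge_atTop (1:ℝ)] with t ht
      have ht0 : (0:ℝ) < t := by linarith
      have e := hqt t
      obtain ⟨A, hA⟩ : ∃ A, h (q t) = A := ⟨_, rfl⟩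
      rw [hA] at e
      have habs : |A| ≤ M := hA ▸ hM (q t)
      have : q t / t - σ * l / T = l / T * (F (q 0) - A) / t := by
        rw [e]
        field_simp
        ring
      rw [Real.norm_eq_abs, this, abs_div, abs_of_pos ht0, abs_mul,
        abs_of_pos (by positivity : (0:ℝ) < l / T)]
      have hb : |F (q 0) - A| ≤ |F (q 0)| + M :=
        le_trans (abs_sub _ _) (by linarith)
      gcongr
    · have := tendsto_inv_atTop_zero.const_mul (l / T * (|F (q 0)| + M))
      simpa [div_eq_mul_inv] using this
  have : Tendsto (fun t => q t / t - σ * l / T + σ * l / T) atTop (nhds (0 + σ * l / T)) :=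
    hcore.add_const _
  simpa [hTdef, hσdef, hpdef] using this
end

section
/- Let V : ℝ → ℝ be a C² function that is periodic with period l > 0, and let E ≤ sup V. Then every solution q : ℝ → ℝ of Newton's equation q̈(t) = -V'(q(t)) with energy E satisfies lim_{t→∞} q(t)/t = 0. In other words, in one dimension the motion is ballistic at a point of phase space if and only if its energy exceeds sup V. -/
open Filter MeasureTheory Set

private lemma periodic_deriv' (f : ℝ → ℝ) (l : ℝ) (h : ∀ x, f (x + l) = f x) (x : ℝ) :
    deriv f (x + l) = deriv f x := by
  have := deriv_comp_add_const f l x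
  rw [show (fun y => f (y + l)) = f from funext h] at this
  exact this.symm

/-- One-dimensional motion in a periodic potential at an
energy not exceeding the maximum of the potential is not ballistic: the
asymptotic velocity `lim_{t→∞} q(t)/t` exists and vanishes. -/
theorem not_ballistic_dim_one (V : ℝ → ℝ) (hV : ContDiff ℝ 2 V)
    (l : ℝ) (hl : 0 < l) (hper : ∀ x, V (x + l) = V x)
    (E : ℝ) (hE : E ≤ ⨆ x, V x)
    (q : ℝ → ℝ) (hq : ContDiff ℝ 2 q)
    (hnewton : ∀ t, deriv (deriv q) t = - deriv V (q t))
    (henergy : ∀ t, (deriv q t) ^ 2 / 2 + V (q t) = E) :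
    Tendsto (fun t => q t / t) atTop (nhds 0) := by
  -- smoothness facts
  have h2 : ContDiff ℝ (1+1) V := by norm_num; exact hV
  obtain ⟨hVd, -, hV1⟩ := contDiff_succ_iff_deriv.mp h2
  obtain ⟨hVd1, hVc2⟩ := contDiff_one_iff_deriv.mp hV1
  have hq2 : ContDiff ℝ (1+1) q := by norm_num; exact hq
  obtain ⟨hqd, -, -⟩ := contDiff_succ_iff_deriv.mp hq2
  -- periodicity of derivatives
  have hper1 : ∀ x, deriv V (x + l) = deriv V x := periodic_deriv' V l hper
  have hper2 : ∀ x, deriv (deriv V) (x + l) = deriv (deriv V) x := periodic_deriv' _ l hper1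
  -- bound on second derivative
  obtain ⟨B0, hB0⟩ : ∃ C, ∀ x ∈ Icc (0:ℝ) l, |deriv (deriv V) x| ≤ C := by
    obtain ⟨C, hC⟩ := (isCompact_Icc (a := (0:ℝ)) (b := l)).exists_bound_of_continuousOn
      hVc2.continuousOn
    exact ⟨C, fun x hx => hC x hx⟩
  set B : ℝ := max B0 1 with hBdef
  have hB1 : (0:ℝ) < B := lt_of_lt_of_le one_pos (le_max_right _ _)
  have hB : ∀ x, |deriv (deriv V) x| ≤ B := by
    intro x
    obtain ⟨y, hy, hxy⟩ := (Function.Periodic.exists_mem_Ico₀ hper2 hl x)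
    rw [hxy]
    exact le_trans (hB0 y ⟨hy.1, hy.2.le⟩) (le_max_left _ _)
  -- maximum of V
  obtain ⟨m, hm, hmax⟩ := (isCompact_Icc (a := (0:ℝ)) (b := l)).exists_isMaxOn
    (nonempty_Icc.mpr hl.le) hV.continuous.continuousOn
  have hbound : ∀ x, V x ≤ V m := by
    intro x
    obtain ⟨y, hy, hxy⟩ := (Function.Periodic.exists_mem_Ico₀ (f := V) hper hl x)
    rw [hxy]; exact hmax ⟨hy.1, hy.2.le⟩
  have hEm : E ≤ V m := hE.trans (ciSup_le hbound)
  -- Lipschitz bound for deriv V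
  have hlip : ∀ a b : ℝ, |deriv V a - deriv V b| ≤ B * |a - b| := by
    intro a b
    have := Convex.norm_image_sub_le_of_norm_deriv_le
      (f := deriv V) (fun x _ => (hVd1 x)) (fun x _ => by
        rw [Real.norm_eq_abs]; exact hB x) convex_univ (mem_univ b) (mem_univ a)
    simpa [Real.norm_eq_abs] using this
  -- key pointwise inequality : (V')² ≤ 2B (Vmax - V)
  have key : ∀ x, (deriv V x)^2 ≤ 2 * B * (V m - V x) := by
    intro x
    set D := deriv V x with hD
    -- g s := V x + D s - B s²/2 - V (x + s) ≤ 0 for all s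
    have hg : ∀ s : ℝ, V x + D * s - B * s^2/2 - V (x + s) ≤ 0 := by
      intro s
      set g : ℝ → ℝ := fun s => V x + D * s - B * s^2/2 - V (x + s) with hgdef
      have hgd : ∀ s, HasDerivAt g (D - B * s - deriv V (x + s)) s := by
        intro s
        have h1 : HasDerivAt (fun s : ℝ => V x + D * s - B * s^2/2) (D - B * s) s := by
          have h0 := (((hasDerivAt_const s (V x)).add ((hasDerivAt_id s).const_mul D)).sub
              (((hasDerivAt_pow 2 s).const_mul B).div_const 2))
          have h0' : HasDerivAt (fun s : ℝ => V x + D * s - B * s^2/2)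
              (0 + D * 1 - B * ((2:ℕ) * s ^ (2 - 1)) / 2) s := h0
          convert h0' using 1
          norm_num
          ring
        have h2 : HasDerivAt (fun s : ℝ => V (x + s)) (deriv V (x + s)) s := by
          simpa [Function.comp_def] using ((hVd (x + s)).hasDerivAt.comp s ((hasDerivAt_id s).const_add x))
        exact h1.sub h2
      have hderiv : ∀ s, deriv g s = D - B * s - deriv V (x + s) := fun s => (hgd s).deriv
      have hg0 : g 0 = 0 := by simp [hgdef]
      rcases le_or_gt 0 s with hs | hs
      · have hanti : AntitoneOn g (Ici (0:ℝ)) := by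
          apply antitoneOn_of_deriv_nonpos (convex_Ici 0)
            (fun t _ => (hgd t).continuousAt.continuousWithinAt)
            (fun t _ => (hgd t).differentiableAt.differentiableWithinAt)
          intro t ht
          rw [interior_Ici] at ht
          rw [hderiv t]
          have := hlip x (x + t)
          have ht0 : (0:ℝ) < t := ht
          rw [show x - (x + t) = -t by ring, abs_neg, abs_of_pos ht0] at this
          have := abs_le.mp (abs_sub_comm (deriv V x) (deriv V (x+t)) ▸ this)
          linarith [this.1, this.2]
        have := hanti (self_mem_Ici) hs hs
        rwa [hg0] at this
      · have hmono : MonotoneOn g (Iic (0:ℝ)) := by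
          apply monotoneOn_of_deriv_nonneg (convex_Iic 0)
            (fun t _ => (hgd t).continuousAt.continuousWithinAt)
            (fun t _ => (hgd t).differentiableAt.differentiableWithinAt)
          intro t ht
          rw [interior_Iic] at ht
          rw [hderiv t]
          have := hlip x (x + t)
          have ht0 : t < 0 := ht
          rw [show x - (x + t) = -t by ring, abs_neg, abs_of_neg ht0] at this
          have := abs_le.mp (abs_sub_comm (deriv V x) (deriv V (x+t)) ▸ this)
          linarith [this.1, this.2]
        have := hmono hs.le (self_mem_Iic) hs.le
        rwa [hg0] at this
    -- plug s = D / B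
    have h1 := hg (D / B)
    have h2 := hbound (x + D / B)
    have hB1' : B ≠ 0 := ne_of_gt hB1
    have expand : V x + D * (D / B) - B * (D / B)^2/2 = V x + D^2/(2*B) := by
      field_simp; ring
    rw [expand] at h1
    have h3 : D^2/(2*B) ≤ V m - V x := by linarith
    have h4 := (div_le_iff₀ (by positivity : (0:ℝ) < 2*B)).mp h3
    linarith
  -- the energy-gap function h
  set h : ℝ → ℝ := fun t => V m - V (q t) with hhdef
  have hder : ∀ t, HasDerivAt h (-(deriv V (q t) * deriv q t)) t := by
    intro t
    have hc : HasDerivAt (fun t => V (q t)) (deriv V (q t) * deriv q t) t :=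
      (hVd (q t)).hasDerivAt.comp t (hqd t).hasDerivAt
    simpa [hhdef, Pi.sub_def] using (hasDerivAt_const t (V m)).sub hc
  have hdh : Differentiable ℝ h := fun t => (hder t).differentiableAt
  have hnonneg : ∀ t, 0 ≤ h t := fun t => sub_nonneg.mpr (hbound (q t))
  have hspeed : ∀ t, (deriv q t)^2 ≤ 2 * h t := by
    intro t
    have := henergy t
    simp only [hhdef]
    linarith
  set C : ℝ := 2 * Real.sqrt B with hCdef
  have hC0 : 0 ≤ C := by rw [hCdef]; positivity
  have hCB : C^2 = 4*B := by
    rw [hCdef, mul_pow, Real.sq_sqrt hB1.le]; ring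
  have habs : ∀ t, |deriv h t| ≤ C * h t := by
    intro t
    have e1 : deriv h t = -(deriv V (q t) * deriv q t) := (hder t).deriv
    have hsq : (deriv h t)^2 ≤ (C * h t)^2 := by
      rw [e1]
      have k1 : (deriv V (q t))^2 ≤ 2*B*(h t) := key (q t)
      have k2 := hspeed t
      have k3 := hnonneg t
      have hmul : (deriv V (q t))^2 * (deriv q t)^2 ≤ (2*B*(h t)) * (2 * h t) :=
        mul_le_mul k1 k2 (sq_nonneg _) (by positivity)
      calc (-(deriv V (q t) * deriv q t))^2 = (deriv V (q t))^2 * (deriv q t)^2 := by ring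
      _ ≤ (2*B*h t) * (2*h t) := hmul
      _ = (C * h t)^2 := by rw [mul_pow, hCB]; ring
    calc |deriv h t| = Real.sqrt ((deriv h t)^2) := (Real.sqrt_sq_eq_abs _).symm
    _ ≤ Real.sqrt ((C*h t)^2) := Real.sqrt_le_sqrt hsq
    _ = C * h t := by rw [Real.sqrt_sq (mul_nonneg hC0 (hnonneg t))]
  -- exponentially weighted monotonicity (Gronwall)
  have hexp1 : ∀ t : ℝ, HasDerivAt (fun t => Real.exp (-(C*t))) (-C * Real.exp (-(C*t))) t := by
    intro t
    have h1 : HasDerivAt (fun t : ℝ => -(C*t)) (-C) t := by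
      simpa [Pi.neg_def] using (((hasDerivAt_id t).const_mul C)).neg
    simpa [mul_comm] using h1.exp
  have hexp2 : ∀ t : ℝ, HasDerivAt (fun t => Real.exp (C*t)) (C * Real.exp (C*t)) t := by
    intro t
    have h1 : HasDerivAt (fun t : ℝ => C*t) C t := by
      simpa using ((hasDerivAt_id t).const_mul C)
    simpa [mul_comm] using h1.exp
  have hφ : ∀ t : ℝ, HasDerivAt (fun t => h t * Real.exp (-(C*t)))
      (deriv h t * Real.exp (-(C*t)) + h t * (-C * Real.exp (-(C*t)))) t :=
    fun t => ((hdh t).hasDerivAt).mul (hexp1 t)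
  have hψ : ∀ t : ℝ, HasDerivAt (fun t => h t * Real.exp (C*t))
      (deriv h t * Real.exp (C*t) + h t * (C * Real.exp (C*t))) t :=
    fun t => ((hdh t).hasDerivAt).mul (hexp2 t)
  have hφanti : Antitone (fun t => h t * Real.exp (-(C*t))) := by
    apply antitone_of_deriv_nonpos (fun t => (hφ t).differentiableAt)
    intro t
    rw [(hφ t).deriv]
    have h1 : deriv h t ≤ C * h t := (abs_le.mp (habs t)).2
    have h2 := (Real.exp_pos (-(C*t))).le
    calc deriv h t * Real.exp (-(C*t)) + h t * (-C * Real.exp (-(C*t)))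
        = (deriv h t - C * h t) * Real.exp (-(C*t)) := by ring
    _ ≤ 0 := mul_nonpos_of_nonpos_of_nonneg (by linarith) h2
  have hψmono : Monotone (fun t => h t * Real.exp (C*t)) := by
    apply monotone_of_deriv_nonneg (fun t => (hψ t).differentiableAt)
    intro t
    rw [(hψ t).deriv]
    have h1 : -(C * h t) ≤ deriv h t := (abs_le.mp (habs t)).1
    have h2 := (Real.exp_pos (C*t)).le
    calc (0:ℝ) ≤ (deriv h t + C * h t) * Real.exp (C*t) :=
      mul_nonneg (by linarith) h2
    _ = deriv h t * Real.exp (C*t) + h t * (C * Real.exp (C*t)) := by ring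
  by_cases h0 : h 0 = 0
  · -- h vanishes identically, so q is constant
    have hz : ∀ t, h t = 0 := by
      intro t
      rcases le_total 0 t with ht | ht
      · have hle := hφanti ht
        simp only [mul_zero, neg_zero, Real.exp_zero, mul_one, h0] at hle
        have := Real.exp_pos (-(C*t))
        nlinarith [hnonneg t]
      · have hle := hψmono ht
        simp only [mul_zero, Real.exp_zero, mul_one, h0] at hle
        have := Real.exp_pos (C*t)
        nlinarith [hnonneg t]
    have hq0 : ∀ t, deriv q t = 0 := by
      intro t
      have h1 := hspeed t
      rw [hz t] at h1
      have h2 : (deriv q t)^2 = 0 := le_antisymm (by linarith) (sq_nonneg _)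
      exact (pow_eq_zero_iff two_ne_zero).mp h2
    have hconst : ∀ t, q t = q 0 := fun t => is_const_of_deriv_eq_zero hqd hq0 t 0
    have heq : (fun t:ℝ => q t / t) = fun t => q 0 / t := funext fun t => by rw [hconst t]
    rw [heq]
    exact tendsto_const_nhds.div_atTop tendsto_id
  · -- h is everywhere positive, so q is trapped between consecutive maxima
    have h0' : 0 < h 0 := (hnonneg 0).lt_of_ne (Ne.symm h0)
    have hpos : ∀ t, 0 < h t := by
      intro t
      rcases le_total 0 t with ht | ht
      · have hle := hψmono ht
        simp only [mul_zero, Real.exp_zero, mul_one] at hle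
        have he := Real.exp_pos (C*t)
        rcases (hnonneg t).lt_or_eq with hgt | heq
        · exact hgt
        · exfalso; rw [← heq] at hle; simp at hle; linarith
      · have hle := hφanti ht
        simp only [mul_zero, neg_zero, Real.exp_zero, mul_one] at hle
        have he := Real.exp_pos (-(C*t))
        rcases (hnonneg t).lt_or_eq with hgt | heq
        · exact hgt
        · exfalso; rw [← heq] at hle; simp at hle; linarith
    have hlt : ∀ t, V (q t) < V m := by
      intro t
      have := hpos t
      simp only [hhdef] at this
      linarith
    have hPer : Function.Periodic V l := hper
    have hmaxper : ∀ k : ℤ, V (m + k * l) = V m := fun k => (hPer.int_mul k) m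
    set k₀ : ℤ := ⌊(q 0 - m)/l⌋ with hk
    set a : ℝ := m + k₀ * l with hadef
    set b : ℝ := m + (k₀+1) * l with hbdef2
    have ha1 : a ≤ q 0 := by
      have h1 := Int.floor_le ((q 0 - m)/l)
      rw [← hk] at h1
      have h2 := (le_div_iff₀ hl).mp h1
      simp only [hadef]; linarith
    have hb1 : q 0 < b := by
      have h1 := Int.lt_floor_add_one ((q 0 - m)/l)
      rw [← hk] at h1
      have h2 := (div_lt_iff₀ hl).mp h1
      simp only [hbdef2]; push_cast; push_cast at h2; linarith
    have hVa : V a = V m := hmaxper k₀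
    have hVb : V b = V m := by
      have := hmaxper (k₀+1)
      push_cast at this
      simpa [hbdef2] using this
    have ha2 : a < q 0 := by
      rcases ha1.lt_or_eq with h | h
      · exact h
      · exfalso; rw [h] at hVa; exact absurd hVa (ne_of_lt (hlt 0))
    have hb2 : ∀ t, q t < b := by
      intro t
      by_contra hc
      push_neg at hc
      have hbmem : b ∈ Set.uIcc (q 0) (q t) := by
        rw [Set.mem_uIcc]; exact Or.inl ⟨hb1.le, hc⟩
      obtain ⟨s, -, hs⟩ := intermediate_value_uIcc (a := (0:ℝ)) (b := t)
        (hq.continuous.continuousOn) hbmem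
      rw [← hs] at hVb
      exact absurd hVb (ne_of_lt (hlt s))
    have ha3 : ∀ t, a < q t := by
      intro t
      by_contra hc
      push_neg at hc
      have hamem : a ∈ Set.uIcc (q 0) (q t) := by
        rw [Set.mem_uIcc]; exact Or.inr ⟨hc, ha2.le⟩
      obtain ⟨s, -, hs⟩ := intermediate_value_uIcc (a := (0:ℝ)) (b := t)
        (hq.continuous.continuousOn) hamem
      rw [← hs] at hVa
      exact absurd hVa (ne_of_lt (hlt s))
    set M : ℝ := max |a| |b| with hMdef
    have hM : ∀ t, |q t| ≤ M := by
      intro t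
      rw [abs_le]
      constructor
      · have := neg_abs_le a
        have := ha3 t
        have : -M ≤ a := by
          have := le_max_left |a| |b|
          have := neg_abs_le a
          simp only [hMdef]; linarith
        linarith [ha3 t]
      · have h1 := le_abs_self b
        have h2 := le_max_right |a| |b|
        have h3 := hb2 t
        simp only [hMdef]; linarith
    apply tendsto_of_tendsto_of_tendsto_of_le_of_le'
      (g := fun t:ℝ => -M / t) (h := fun t:ℝ => M / t)
    · exact tendsto_const_nhds.div_atTop tendsto_id
    · exact tendsto_const_nhds.div_atTop tendsto_id
    · filter_upwards [eventually_gt_atTop (0:ℝ)] with t ht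
      have := (abs_le.mp (hM t)).1
      gcongr
    · filter_upwards [eventually_gt_atTop (0:ℝ)] with t ht
      have := (abs_le.mp (hM t)).2
      gcongr
end

section
/- Let V : ℝ^d → ℝ be continuous and periodic with respect to a full-rank lattice ℒ ⊂ ℝ^d, let E ≥ sup V, and let ℓ ∈ ℒ. Then there exists q₀ ∈ ℝ^d such that ∫₀¹ √(E - V(q₀ + τℓ)) dτ ≤ √(E - V̄), where V̄ is the mean value of V over a fundamental domain of ℒ. -/
open MeasureTheory

/-- For a continuous lattice-periodic potential, `E ≥ sup V`
and a lattice vector `ℓ`, there is a base point `q₀` for which the Jacobi length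
weight `∫₀¹ √(E - V(q₀ + τℓ)) dτ` of the straight closed line in direction `ℓ`
is at most `√(E - V̄)`, where `V̄` is the mean of `V` over a fundamental domain. -/
theorem exists_short_straight_line (d : ℕ)
    (b : Module.Basis (Fin d) ℝ (EuclideanSpace ℝ (Fin d)))
    (V : EuclideanSpace ℝ (Fin d) → ℝ) (hVc : Continuous V)
    (hper : ∀ ℓ ∈ Submodule.span ℤ (Set.range b), ∀ x, V (x + ℓ) = V x)
    (E : ℝ) (hE : (⨆ x, V x) ≤ E)
    (ℓ : EuclideanSpace ℝ (Fin d)) (hℓ : ℓ ∈ Submodule.span ℤ (Set.range b)) :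
    ∃ q₀ : EuclideanSpace ℝ (Fin d),
      (∫ τ in (0:ℝ)..1, Real.sqrt (E - V (q₀ + τ • ℓ)))
        ≤ Real.sqrt (E - (∫ x in ZSpan.fundamentalDomain b, V x) /
            (volume (ZSpan.fundamentalDomain b)).toReal) := by
  classical
  set D := ZSpan.fundamentalDomain b with hDdef
  have hDb : Bornology.IsBounded D := ZSpan.fundamentalDomain_isBounded b
  have hDm : MeasurableSet D := ZSpan.fundamentalDomain_measurableSet b
  have hvol_ne : volume D ≠ 0 := ZSpan.measure_fundamentalDomain_ne_zero b
  have hvol_lt : volume D < ⊤ := hDb.measure_lt_top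
  have hvolpos : 0 < (volume D).toReal := ENNReal.toReal_pos hvol_ne hvol_lt.ne
  -- boundedness of V
  obtain ⟨C, hC⟩ : ∃ C : ℝ, ∀ x, ‖V x‖ ≤ C := by
    have hK : IsCompact (closure D) := hDb.isCompact_closure
    obtain ⟨C, hC⟩ := isBounded_iff_forall_norm_le.mp (hK.image hVc).isBounded
    refine ⟨C, fun x => ?_⟩
    obtain ⟨g, hg, -⟩ := ZSpan.exist_unique_vadd_mem_fundamentalDomain b x
    have : V x = V ((g : EuclideanSpace ℝ (Fin d)) + x) := by
      rw [add_comm]; exact (hper g g.2 x).symm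
    rw [this]
    exact hC _ ⟨_, subset_closure hg, rfl⟩
  have hVE : ∀ x, V x ≤ E := by
    intro x
    refine le_trans (le_ciSup ⟨C, ?_⟩ x) hE
    rintro _ ⟨y, rfl⟩
    exact (abs_le.mp (by simpa using hC y)).2
  haveI hMV : MeasurableVAdd (Submodule.span ℤ (Set.range ⇑b)) (EuclideanSpace ℝ (Fin d)) := by
    constructor
    · intro c
      exact (measurable_subtype_coe.add_const c)
  haveI hVI : VAddInvariantMeasure (Submodule.span ℤ (Set.range ⇑b))
      (EuclideanSpace ℝ (Fin d)) volume := by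
    constructor
    intro c s hs
    exact measure_preimage_add volume (c : EuclideanSpace ℝ (Fin d)) s
  -- fundamental domain and translation invariance
  have hFD : IsAddFundamentalDomain (Submodule.span ℤ (Set.range b)) D volume :=
    ZSpan.isAddFundamentalDomain b volume
  have htrans : ∀ v : EuclideanSpace ℝ (Fin d),
      (∫ q in D, V (q + v)) = ∫ q in D, V q := by
    intro v
    have himg : (fun q => q + v) '' D = (fun q => q - v) ⁻¹' D := by
      ext x
      simp only [Set.mem_image, Set.mem_preimage]
      constructor
      · rintro ⟨y, hy, rfl⟩; simpa using hy
      · intro hx; exact ⟨x - v, hx, by abel⟩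
    have hFD' : IsAddFundamentalDomain (Submodule.span ℤ (Set.range b))
        ((fun q => q + v) '' D) volume := by
      refine IsAddFundamentalDomain.mk' ?_ (fun x => ?_)
      · rw [himg]
        exact ((measurable_id.sub measurable_const) hDm).nullMeasurableSet
      · obtain ⟨g, hg, hgu⟩ := ZSpan.exist_unique_vadd_mem_fundamentalDomain b (x - v)
        have hmem : ∀ h : Submodule.span ℤ (Set.range b),
            h +ᵥ x ∈ (fun q => q + v) '' D ↔ h +ᵥ (x - v) ∈ D := by
          intro h
          rw [himg, Set.mem_preimage]
          have : (h +ᵥ x) - v = h +ᵥ (x - v) := by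
            show ((h : EuclideanSpace ℝ (Fin d)) + x) - v = (h : EuclideanSpace ℝ (Fin d)) + (x - v)
            abel
          rw [this]
        exact ⟨g, (hmem g).mpr hg, fun y hy => hgu y ((hmem y).mp hy)⟩
    have hinv : ∀ (g : Submodule.span ℤ (Set.range b)) (x : EuclideanSpace ℝ (Fin d)),
        V (g +ᵥ x) = V x := by
      intro g x
      show V ((g : EuclideanSpace ℝ (Fin d)) + x) = V x
      rw [add_comm]; exact hper g g.2 x
    calc (∫ q in D, V (q + v))
        = ∫ x in (fun q => q + v) '' D, V x :=
          ((measurePreserving_add_right volume v).setIntegral_image_emb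
            (measurableEmbedding_addRight v) V D).symm
      _ = ∫ q in D, V q := (hFD'.setIntegral_eq hFD hinv)
  -- the averaged function
  set W : EuclideanSpace ℝ (Fin d) → ℝ := fun q => ∫ τ in (0:ℝ)..1, V (q + τ • ℓ) with hWdef
  have hcont2 : Continuous (Function.uncurry fun (q : EuclideanSpace ℝ (Fin d)) (τ : ℝ) =>
      V (q + τ • ℓ)) :=
    hVc.comp (continuous_fst.add (continuous_snd.smul continuous_const))
  have hWc : Continuous W :=
    intervalIntegral.continuous_parametric_intervalIntegral_of_continuous' hcont2 0 1
  have hWbound : ∀ q, ‖W q‖ ≤ C := by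
    intro q
    have := intervalIntegral.norm_integral_le_of_norm_le_const
      (C := C) (f := fun τ => V (q + τ • ℓ)) (a := 0) (b := 1)
      (fun x _ => hC _)
    simpa using this
  -- finite measures
  haveI hfin1 : IsFiniteMeasure (volume.restrict D) :=
    ⟨by rwa [Measure.restrict_apply_univ]⟩
  haveI hfin2 : IsProbabilityMeasure (volume.restrict (Set.Ioc (0:ℝ) 1)) :=
    ⟨by simp [Measure.restrict_apply_univ]⟩
  -- Fubini : the mean of W over D equals the mean of V over D
  have hsw : (∫ q in D, W q) = ∫ q in D, V q := by
    have hint : Integrable (Function.uncurry fun (q : EuclideanSpace ℝ (Fin d)) (τ : ℝ) =>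
        V (q + τ • ℓ)) ((volume.restrict D).prod (volume.restrict (Set.Ioc (0:ℝ) 1))) := by
      refine ⟨hcont2.aestronglyMeasurable, ?_⟩
      exact HasFiniteIntegral.of_bounded (C := C) (ae_of_all _ (fun p => hC _))
    calc (∫ q in D, W q)
        = ∫ q in D, ∫ τ in Set.Ioc (0:ℝ) 1, V (q + τ • ℓ) := by
          refine setIntegral_congr_fun hDm (fun q _ => ?_)
          exact intervalIntegral.integral_of_le zero_le_one
      _ = ∫ τ in Set.Ioc (0:ℝ) 1, ∫ q in D, V (q + τ • ℓ) := integral_integral_swap hint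
      _ = ∫ τ in Set.Ioc (0:ℝ) 1, ∫ q in D, V q := by
          refine integral_congr_ae (ae_of_all _ (fun τ => ?_))
          exact htrans (τ • ℓ)
      _ = ∫ q in D, V q := by simp
  -- pick the maximizer of W on the closure of D
  have hDne : D.Nonempty := nonempty_of_measure_ne_zero hvol_ne
  obtain ⟨q₀, hq₀mem, hq₀max⟩ :=
    hDb.isCompact_closure.exists_isMaxOn hDne.closure hWc.continuousOn
  refine ⟨q₀, ?_⟩
  -- W q₀ is at least the mean of V over D
  have hWq₀ : (∫ x in D, V x) / (volume D).toReal ≤ W q₀ := by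
    rw [div_le_iff₀ hvolpos]
    have hWint : IntegrableOn W D volume :=
      ⟨hWc.aestronglyMeasurable.restrict,
        HasFiniteIntegral.of_bounded (C := C) (ae_of_all _ hWbound)⟩
    calc (∫ x in D, V x) = ∫ q in D, W q := hsw.symm
      _ ≤ ∫ _ in D, W q₀ := by
          refine setIntegral_mono_on hWint (integrableOn_const hvol_lt.ne) hDm ?_
          exact fun q hq => hq₀max (subset_closure hq)
      _ = W q₀ * (volume D).toReal := by simp [mul_comm, measureReal_def]
  -- Jensen's inequality for the concave square root
  have hf_cont : Continuous fun τ : ℝ => E - V (q₀ + τ • ℓ) :=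
    continuous_const.sub (hVc.comp (continuous_const.add (continuous_id.smul continuous_const)))
  have hjensen : (∫ τ in Set.Ioc (0:ℝ) 1, Real.sqrt (E - V (q₀ + τ • ℓ)))
      ≤ Real.sqrt (∫ τ in Set.Ioc (0:ℝ) 1, (E - V (q₀ + τ • ℓ))) := by
    refine ConcaveOn.le_map_integral (s := Set.Ici (0:ℝ))
      (Real.strictConcaveOn_sqrt.concaveOn) Real.continuous_sqrt.continuousOn isClosed_Ici
      (ae_of_all _ (fun τ => by simp [sub_nonneg, hVE])) ?_ ?_
    · exact (hf_cont.integrableOn_Ioc)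
    · exact ((Real.continuous_sqrt.comp hf_cont).integrableOn_Ioc)
  have hmean : (∫ τ in Set.Ioc (0:ℝ) 1, (E - V (q₀ + τ • ℓ))) = E - W q₀ := by
    have hVint : IntegrableOn (fun τ : ℝ => V (q₀ + τ • ℓ)) (Set.Ioc (0:ℝ) 1) :=
      (hVc.comp (continuous_const.add (continuous_id.smul continuous_const))).integrableOn_Ioc
    have hWeq : W q₀ = ∫ τ in Set.Ioc (0:ℝ) 1, V (q₀ + τ • ℓ) :=
      intervalIntegral.integral_of_le zero_le_one
    rw [integral_sub (integrable_const E) hVint, hWeq, integral_const]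
    simp
  have hfinal : (∫ τ in (0:ℝ)..1, Real.sqrt (E - V (q₀ + τ • ℓ)))
      ≤ Real.sqrt (E - W q₀) := by
    rw [intervalIntegral.integral_of_le zero_le_one]
    rw [hmean] at hjensen
    exact hjensen
  refine hfinal.trans (Real.sqrt_le_sqrt ?_)
  exact sub_le_sub_left hWq₀ E
end
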